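/- arXiv:2501.06339 — 3 statements merged into one kernel-verified Lean document; each statement's English description precedes it below -/
import Mathlib

section
/- Hedge (exponential weights) regret bound: Let K = |A|, let f_1,…,f_T: X × A → [0,1] be an arbitrary sequence of functions, define π_1(·|x) uniform on A for every x, and π_{t+1}(a|x) ∝ π_t(a|x)·exp(η f_t(x,a)). If η = √(log K/(4(e−2)T)) and T ≥ log K/(e−2), then for every x ∈ X and every policy π: Σ_{t=1}^T (f_t(x,π) − f_t(x,π_t)) ≤ 4√(T log K), where f(x,π) := E_{a∼π(·|x)} f(x,a). Consequently, for any probability measure P̂ over X, Σ_{t=1}^T P̂(f_t(·,π) − f_t(·,π_t)) ≤ 4√(T log K). -/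
/-!
STATEMENT 14: Hedge (exponential weights) regret bound.
-/

/-- Expectation of `f` under a (discrete) probability mass function `p`. -/
noncomputable def pmfExp {α : Type*} (p : PMF α) (f : α → ℝ) : ℝ :=
  ∑' a, (p a).toReal * f a

/-- `π : X → A → ℝ` is a (stochastic) policy if every `π x` is a probability
vector over the finite action set `A`. -/
def IsPolicy {X A : Type*} [Fintype A] (π : X → A → ℝ) : Prop :=
  ∀ x, (∀ a, 0 ≤ π x a) ∧ (∑ a, π x a) = 1

theorem hedge_aux_exp (x : ℝ) (h0 : 0 ≤ x) (h1 : x ≤ 1) :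
    Real.exp x ≤ 1 + x + (3/4) * x^2 := by
  have hb := Real.exp_bound (x := x) (by rw [abs_of_nonneg h0]; exact h1) (n := 2) (by norm_num)
  have h2 : ∑ m ∈ Finset.range 2, x ^ m / (m.factorial : ℝ) = 1 + x := by
    simp [Finset.sum_range_succ]
  rw [h2, abs_of_nonneg h0] at hb
  have := abs_le.mp hb
  norm_num at this
  linarith [this.2]

set_option maxHeartbeats 1000000 in
/-- Hedge (exponential weights) regret bound: if `π_1` is uniform,
`π_{t+1}(a|x) ∝ π_t(a|x) exp(η f_t(x,a))`, `η = √(log K / (4(e-2)T))` and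
`T ≥ log K / (e-2)`, then for every context `x` and every policy `π`,
`Σ_{t<T} (f_t(x,π) - f_t(x,π_t)) ≤ 4 √(T log K)`; consequently the same bound
holds after averaging contexts with respect to any probability measure. -/
theorem hedge_regret {X A : Type*} [Fintype A] (K : ℕ) (hK : K = Fintype.card A)
    (hK1 : 1 ≤ K) (T : ℕ) (η : ℝ)
    (hη : η = Real.sqrt (Real.log K / (4 * (Real.exp 1 - 2) * T)))
    (hT : (T : ℝ) ≥ Real.log K / (Real.exp 1 - 2))
    (f : ℕ → X → A → ℝ) (hf : ∀ t x a, f t x a ∈ Set.Icc (0 : ℝ) 1)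
    (πs : ℕ → X → A → ℝ)
    (hπ0 : ∀ x a, πs 0 x a = 1 / K)
    (hπs : ∀ t x a, πs (t + 1) x a =
      πs t x a * Real.exp (η * f t x a) / ∑ a', πs t x a' * Real.exp (η * f t x a')) :
    (∀ x : X, ∀ π : X → A → ℝ, IsPolicy π →
      ∑ t ∈ Finset.range T, ((∑ a, π x a * f t x a) - ∑ a, πs t x a * f t x a) ≤
        4 * Real.sqrt (T * Real.log K)) ∧
    (∀ P : PMF X, ∀ π : X → A → ℝ, IsPolicy π →
      ∑ t ∈ Finset.range T,
          pmfExp P (fun x => (∑ a, π x a * f t x a) - ∑ a, πs t x a * f t x a) ≤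
        4 * Real.sqrt (T * Real.log K)) := by
  have hc : (0:ℝ) < Real.exp 1 - 2 := by linarith [Real.exp_one_gt_d9]
  have hcu : Real.exp 1 - 2 < 3/4 := by linarith [Real.exp_one_lt_d9]
  have hKpos : 0 < Fintype.card A := by omega
  haveI : Nonempty A := Fintype.card_pos_iff.mp hKpos
  have hKR : (1:ℝ) ≤ K := by exact_mod_cast hK1
  have hlogK : 0 ≤ Real.log K := Real.log_nonneg hKR
  have hη0 : 0 ≤ η := by rw [hη]; exact Real.sqrt_nonneg _
  -- η ≤ 1/2
  have hηhalf : η ≤ 1/2 := by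
    have h14 : Real.sqrt (1/4) = 1/2 := by
      rw [show (1/4:ℝ) = (1/2)^2 by norm_num, Real.sqrt_sq (by norm_num)]
    rw [hη, ← h14]
    apply Real.sqrt_le_sqrt
    rcases Nat.eq_zero_or_pos T with h | h
    · simp [h]
    · have hT' : (0:ℝ) < T := by exact_mod_cast h
      rw [div_le_iff₀ (by positivity)]
      have hlt : Real.log K ≤ (Real.exp 1 - 2) * T := by
        rw [ge_iff_le, div_le_iff₀ hc] at hT; linarith
      nlinarith
  -- closed form
  set S : ℕ → X → A → ℝ := fun t x a => ∑ s ∈ Finset.range t, f s x a with hSdef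
  set Z : ℕ → X → ℝ := fun t x => ∑ a, Real.exp (η * S t x a) with hZdef
  have hZ' : ∀ t x, Z t x = ∑ a, Real.exp (η * S t x a) := fun t x => rfl
  have hZpos : ∀ t x, 0 < Z t x := fun t x =>
    Finset.sum_pos (fun a _ => Real.exp_pos _) Finset.univ_nonempty
  have hclosed : ∀ t x a, πs t x a = Real.exp (η * S t x a) / Z t x := by
    intro t
    induction t with
    | zero =>
      intro x a
      rw [hπ0]
      simp only [hSdef, hZdef, Finset.range_zero, Finset.sum_empty, mul_zero, Real.exp_zero]
      rw [Finset.sum_const, nsmul_eq_mul, mul_one, Finset.card_univ, ← hK]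
    | succ t ih =>
      intro x a
      rw [hπs]
      have hnum : ∀ b, πs t x b * Real.exp (η * f t x b) =
          Real.exp (η * S (t+1) x b) / Z t x := by
        intro b
        rw [ih x b, div_mul_eq_mul_div, ← Real.exp_add]
        congr 2
        simp only [hSdef, Finset.sum_range_succ]; ring
      simp only [hnum]
      rw [← Finset.sum_div, ← hZ']
      have h1 : Z t x ≠ 0 := (hZpos t x).ne'
      have h2 : Z (t+1) x ≠ 0 := (hZpos (t+1) x).ne'
      field_simp
  have hp_sum : ∀ t x, ∑ a, πs t x a = 1 := by
    intro t x
    simp only [hclosed]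
    rw [← Finset.sum_div, ← hZ']
    exact div_self (hZpos t x).ne'
  have hp_nonneg : ∀ t x a, 0 ≤ πs t x a := by
    intro t x a
    rw [hclosed]
    positivity
  -- value bounds
  have hval : ∀ (q : A → ℝ), (∀ a, 0 ≤ q a) → (∑ a, q a) = 1 → ∀ t x,
      0 ≤ (∑ a, q a * f t x a) ∧ (∑ a, q a * f t x a) ≤ 1 := by
    intro q hq hq1 t x
    constructor
    · exact Finset.sum_nonneg fun a _ => mul_nonneg (hq a) (hf t x a).1
    · calc ∑ a, q a * f t x a ≤ ∑ a, q a :=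
            Finset.sum_le_sum fun a _ => by nlinarith [(hf t x a).1, (hf t x a).2, hq a]
        _ = 1 := hq1
  -- step inequality
  have hstep : ∀ t x, Real.log (Z (t+1) x) ≤
      Real.log (Z t x) + η * (∑ a, πs t x a * f t x a) + (3/4) * η^2 := by
    intro t x
    have hzt := hZpos t x
    have hfac : Z (t+1) x = Z t x * ∑ a, πs t x a * Real.exp (η * f t x a) := by
      rw [Finset.mul_sum, hZ']
      apply Finset.sum_congr rfl
      intro a _
      rw [hclosed t x a]
      rw [div_mul_eq_mul_div, ← Real.exp_add, mul_div_assoc', mul_comm (Z t x),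
        mul_div_assoc, div_self hzt.ne', mul_one]
      congr 2
      simp only [hSdef, Finset.sum_range_succ]; ring
    have hbound : ∑ a, πs t x a * Real.exp (η * f t x a) ≤
        1 + η * (∑ a, πs t x a * f t x a) + (3/4) * η^2 := by
      have hterm : ∀ a, πs t x a * Real.exp (η * f t x a) ≤
          πs t x a * (1 + η * f t x a + (3/4) * η^2) := by
        intro a
        apply mul_le_mul_of_nonneg_left _ (hp_nonneg t x a)
        calc Real.exp (η * f t x a) ≤ 1 + η * f t x a + (3/4) * (η * f t x a)^2 :=
              hedge_aux_exp _ (mul_nonneg hη0 (hf t x a).1)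
                (by nlinarith [(hf t x a).1, (hf t x a).2])
          _ ≤ 1 + η * f t x a + (3/4) * η^2 := by
              have hf2 : (f t x a)^2 ≤ 1 := by nlinarith [(hf t x a).1, (hf t x a).2]
              nlinarith [mul_le_mul_of_nonneg_left hf2 (sq_nonneg η)]
      calc ∑ a, πs t x a * Real.exp (η * f t x a)
          ≤ ∑ a, πs t x a * (1 + η * f t x a + (3/4) * η^2) :=
            Finset.sum_le_sum fun a _ => hterm a
        _ = (∑ a, πs t x a) + η * (∑ a, πs t x a * f t x a)
              + (3/4) * η^2 * (∑ a, πs t x a) := by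
            rw [Finset.mul_sum, Finset.mul_sum, ← Finset.sum_add_distrib,
              ← Finset.sum_add_distrib]
            apply Finset.sum_congr rfl
            intro a _; ring
        _ = 1 + η * (∑ a, πs t x a * f t x a) + (3/4) * η^2 := by
            rw [hp_sum]; ring
    have hSpos : (1:ℝ) ≤ ∑ a, πs t x a * Real.exp (η * f t x a) := by
      calc (1:ℝ) = ∑ a, πs t x a := (hp_sum t x).symm
        _ ≤ ∑ a, πs t x a * Real.exp (η * f t x a) := by
            apply Finset.sum_le_sum
            intro a _
            nlinarith [Real.one_le_exp (mul_nonneg hη0 (hf t x a).1), hp_nonneg t x a]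
    rw [hfac, Real.log_mul hzt.ne' (by linarith : (0:ℝ) < ∑ a, πs t x a * Real.exp (η * f t x a)).ne']
    have hlog := Real.log_le_sub_one_of_pos (show (0:ℝ) < ∑ a, πs t x a * Real.exp (η * f t x a) by linarith)
    linarith
  -- telescoping
  have htel : ∀ x, Real.log (Z T x) ≤
      Real.log K + (∑ t ∈ Finset.range T, η * (∑ a, πs t x a * f t x a)) + (3/4) * η^2 * T := by
    intro x
    have hZ0 : Z 0 x = K := by
      simp only [hZdef, hSdef, Finset.range_zero, Finset.sum_empty, mul_zero, Real.exp_zero]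
      rw [Finset.sum_const, nsmul_eq_mul, mul_one, Finset.card_univ, ← hK]
    have gen : ∀ n : ℕ, Real.log (Z n x) ≤
        Real.log K + (∑ t ∈ Finset.range n, η * (∑ a, πs t x a * f t x a)) + (3/4) * η^2 * n := by
      intro n
      induction n with
      | zero => simp [hZ0]
      | succ n ihn =>
        rw [Finset.sum_range_succ]
        push_cast
        linarith [hstep n x]
    exact gen T
  -- lower bound
  have hlow : ∀ x (π : X → A → ℝ), IsPolicy π →
      η * ∑ t ∈ Finset.range T, (∑ a, π x a * f t x a) ≤ Real.log (Z T x) := by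
    intro x π hπx
    have h1 : ∀ a, η * S T x a ≤ Real.log (Z T x) := by
      intro a
      have hle : Real.exp (η * S T x a) ≤ Z T x := by
        rw [hZ']
        exact Finset.single_le_sum (f := fun b => Real.exp (η * S T x b))
          (fun b _ => (Real.exp_pos _).le) (Finset.mem_univ a)
      calc η * S T x a = Real.log (Real.exp (η * S T x a)) := (Real.log_exp _).symm
        _ ≤ Real.log (Z T x) := Real.log_le_log (Real.exp_pos _) hle
    calc η * ∑ t ∈ Finset.range T, (∑ a, π x a * f t x a)
        = ∑ t ∈ Finset.range T, ∑ a, π x a * (η * f t x a) := by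
          rw [Finset.mul_sum]
          refine Finset.sum_congr rfl fun t _ => ?_
          rw [Finset.mul_sum]
          exact Finset.sum_congr rfl fun a _ => by ring
      _ = ∑ a, ∑ t ∈ Finset.range T, π x a * (η * f t x a) := Finset.sum_comm
      _ = ∑ a, π x a * (η * S T x a) := by
          refine Finset.sum_congr rfl fun a _ => ?_
          simp only [hSdef, Finset.mul_sum]
      _ ≤ ∑ a, π x a * Real.log (Z T x) :=
          Finset.sum_le_sum fun a _ => mul_le_mul_of_nonneg_left (h1 a) ((hπx x).1 a)
      _ = Real.log (Z T x) := by rw [← Finset.sum_mul, (hπx x).2, one_mul]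
  -- Part 1
  have part1 : ∀ x : X, ∀ π : X → A → ℝ, IsPolicy π →
      ∑ t ∈ Finset.range T, ((∑ a, π x a * f t x a) - ∑ a, πs t x a * f t x a) ≤
        4 * Real.sqrt (T * Real.log K) := by
    intro x π hπx
    have key : η * (∑ t ∈ Finset.range T,
        ((∑ a, π x a * f t x a) - ∑ a, πs t x a * f t x a)) ≤
        Real.log K + (3/4) * η^2 * T := by
      have h1 := hlow x π hπx
      have h2 := htel x
      have h3 : ∑ t ∈ Finset.range T, η * (∑ a, πs t x a * f t x a) =
          η * ∑ t ∈ Finset.range T, (∑ a, πs t x a * f t x a) := by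
        rw [Finset.mul_sum]
      rw [Finset.sum_sub_distrib, mul_sub]
      rw [h3] at h2
      linarith
    rcases Nat.eq_zero_or_pos T with hT0 | hT0
    · subst hT0
      simp only [Finset.range_zero, Finset.sum_empty]
      positivity
    rcases eq_or_lt_of_le hlogK with hlog0 | hlogpos
    · -- log K = 0, so K = 1 and both policies are degenerate
      have hK1' : K = 1 := by
        by_contra h
        have h2 : (2:ℝ) ≤ K := by
          have : 2 ≤ K := by omega
          exact_mod_cast this
        have := Real.log_le_log (by norm_num : (0:ℝ) < 2) h2
        nlinarith [Real.log_pos (by norm_num : (1:ℝ) < 2)]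
      have hcard : Fintype.card A = 1 := by omega
      obtain ⟨a0, ha0⟩ := Fintype.card_eq_one_iff.mp hcard
      have huniv : (Finset.univ : Finset A) = {a0} :=
        Finset.eq_singleton_iff_unique_mem.mpr ⟨Finset.mem_univ _, fun b _ => ha0 b⟩
      have hzero : ∑ t ∈ Finset.range T,
          ((∑ a, π x a * f t x a) - ∑ a, πs t x a * f t x a) = 0 := by
        apply Finset.sum_eq_zero
        intro t _
        have h1 : π x a0 = 1 := by
          have := (hπx x).2; rwa [huniv, Finset.sum_singleton] at this
        have h2 : πs t x a0 = 1 := by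
          have := hp_sum t x; rwa [huniv, Finset.sum_singleton] at this
        rw [huniv, Finset.sum_singleton, Finset.sum_singleton, h1, h2]
        ring
      rw [hzero]
      positivity
    · -- main case
      have hTpos : (0:ℝ) < T := by exact_mod_cast hT0
      have hargpos : 0 < Real.log K / (4 * (Real.exp 1 - 2) * T) := by positivity
      have hηpos : 0 < η := by rw [hη]; exact Real.sqrt_pos.mpr hargpos
      have hη2 : η^2 = Real.log K / (4 * (Real.exp 1 - 2) * T) := by
        rw [hη]; exact Real.sq_sqrt hargpos.le
      have hη2' : η^2 * (4 * (Real.exp 1 - 2) * T) = Real.log K := by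
        rw [hη2]; field_simp
      set s := Real.sqrt (↑T * Real.log K) with hs
      have hs0 : 0 ≤ s := Real.sqrt_nonneg _
      have hs2 : s^2 = ↑T * Real.log K := Real.sq_sqrt (by positivity)
      have hs2' : s^2 = 4 * (Real.exp 1 - 2) * (↑T * η)^2 := by
        rw [hs2, ← hη2']; ring
      have hmain : (4 * (Real.exp 1 - 2) + 3/4) * ↑T * η ≤ 4 * s := by
        have hsq : ((4 * (Real.exp 1 - 2) + 3/4) * ↑T * η)^2 ≤ (4 * s)^2 := by
          have h1 : ((4 * (Real.exp 1 - 2) + 3/4) * ↑T * η)^2 =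
              (4 * (Real.exp 1 - 2) + 3/4)^2 * (↑T * η)^2 := by ring
          have h2 : (4 * s)^2 = 16 * (4 * (Real.exp 1 - 2)) * (↑T * η)^2 := by
            rw [mul_pow, hs2']; ring
          rw [h1, h2]
          have hcl : (0.71:ℝ) < Real.exp 1 - 2 := by linarith [Real.exp_one_gt_d9]
          have hcoef : (4 * (Real.exp 1 - 2) + 3/4)^2 ≤ 16 * (4 * (Real.exp 1 - 2)) := by
            nlinarith [hcl, hcu]
          have hTη : (0:ℝ) ≤ (↑T * η)^2 := sq_nonneg _
          nlinarith [mul_le_mul_of_nonneg_right hcoef hTη]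
        calc (4 * (Real.exp 1 - 2) + 3/4) * ↑T * η
            = Real.sqrt (((4 * (Real.exp 1 - 2) + 3/4) * ↑T * η)^2) :=
              (Real.sqrt_sq (by positivity)).symm
          _ ≤ Real.sqrt ((4 * s)^2) := Real.sqrt_le_sqrt hsq
          _ = 4 * s := Real.sqrt_sq (by positivity)
      have hfin : η * (∑ t ∈ Finset.range T,
          ((∑ a, π x a * f t x a) - ∑ a, πs t x a * f t x a)) ≤ η * (4 * s) := by
        have heq : Real.log K + (3/4) * η^2 * ↑T =
            ((4 * (Real.exp 1 - 2) + 3/4) * ↑T * η) * η := by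
          rw [← hη2']; ring
        have := mul_le_mul_of_nonneg_right hmain hη0
        calc η * _ ≤ Real.log K + (3/4) * η^2 * ↑T := key
          _ = ((4 * (Real.exp 1 - 2) + 3/4) * ↑T * η) * η := heq
          _ ≤ (4 * s) * η := this
          _ = η * (4 * s) := by ring
      exact le_of_mul_le_mul_left hfin hηpos
  refine ⟨part1, ?_⟩
  -- Part 2
  intro P π hπx
  have hPsum : Summable (fun x => (P x).toReal) :=
    ENNReal.summable_toReal (by rw [P.tsum_coe]; exact ENNReal.one_ne_top)
  have hPt : ∑' x, (P x).toReal = 1 := by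
    rw [← ENNReal.tsum_toReal_eq (fun a => P.apply_ne_top a), P.tsum_coe, ENNReal.toReal_one]
  have hg : ∀ t x, |(∑ a, π x a * f t x a) - ∑ a, πs t x a * f t x a| ≤ 1 := by
    intro t x
    have h1 := hval (π x) ((hπx x).1) ((hπx x).2) t x
    have h2 := hval (fun a => πs t x a) (hp_nonneg t x) (hp_sum t x) t x
    rw [abs_le]
    constructor <;> [linarith [h1.1, h2.2]; linarith [h1.2, h2.1]]
  have hsummand : ∀ t, Summable (fun x =>
      (P x).toReal * ((∑ a, π x a * f t x a) - ∑ a, πs t x a * f t x a)) := by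
    intro t
    apply Summable.of_norm
    apply Summable.of_nonneg_of_le (fun x => norm_nonneg _) (fun x => ?_) hPsum
    rw [Real.norm_eq_abs, abs_mul, abs_of_nonneg ENNReal.toReal_nonneg]
    calc (P x).toReal * |(∑ a, π x a * f t x a) - ∑ a, πs t x a * f t x a|
        ≤ (P x).toReal * 1 := mul_le_mul_of_nonneg_left (hg t x) ENNReal.toReal_nonneg
      _ = (P x).toReal := mul_one _
  have hlowSummable : Summable (fun x => (P x).toReal *
      ∑ t ∈ Finset.range T, ((∑ a, π x a * f t x a) - ∑ a, πs t x a * f t x a)) := by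
    have : (fun x => (P x).toReal *
        ∑ t ∈ Finset.range T, ((∑ a, π x a * f t x a) - ∑ a, πs t x a * f t x a)) =
        fun x => ∑ t ∈ Finset.range T,
          (P x).toReal * ((∑ a, π x a * f t x a) - ∑ a, πs t x a * f t x a) := by
      funext x; rw [Finset.mul_sum]
    rw [this]
    exact summable_sum fun t _ => hsummand t
  calc ∑ t ∈ Finset.range T,
        pmfExp P (fun x => (∑ a, π x a * f t x a) - ∑ a, πs t x a * f t x a)
      = ∑' x, ∑ t ∈ Finset.range T,
          (P x).toReal * ((∑ a, π x a * f t x a) - ∑ a, πs t x a * f t x a) :=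
        (Summable.tsum_finsetSum fun t _ => hsummand t).symm
    _ = ∑' x, (P x).toReal *
          ∑ t ∈ Finset.range T, ((∑ a, π x a * f t x a) - ∑ a, πs t x a * f t x a) := by
        apply tsum_congr; intro x; rw [Finset.mul_sum]
    _ ≤ ∑' x, (P x).toReal * (4 * Real.sqrt (↑T * Real.log ↑K)) := by
        apply Summable.tsum_le_tsum _ hlowSummable (hPsum.mul_right _)
        intro x
        exact mul_le_mul_of_nonneg_left (part1 x π hπx) ENNReal.toReal_nonneg
    _ = 4 * Real.sqrt (↑T * Real.log ↑K) := by
        rw [tsum_mul_right, hPt, one_mul]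
end

section
/- Fixed point of induced MDPs: Let M be an episodic MDP with horizon H, let π be any policy, and let Q = {Q_h}_{h∈[H]} be any sequence of functions Q_h: X × A → ℝ (with Q_{H+1} ≡ 0). Let M(Q,π) be the MDP identical to M except its mean reward at step h is r_h^{π,Q}(x,a) := r_h(x,a) − ([T_h^π Q_{h+1}](x,a) − Q_h(x,a)). Then the action-value functions of π in M(Q,π) equal Q, i.e., Q_{h,M(Q,π)}^π = Q_h for all h ∈ [H]. -/
/-- `π : ℕ → X → A → ℝ` is a (nonstationary, stochastic) policy. -/
def IsPolicySeq {X A : Type*} [Fintype A] (π : ℕ → X → A → ℝ) : Prop :=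
  ∀ h x, (∀ a, 0 ≤ π h x a) ∧ (∑ a, π h x a) = 1

/-- `k`-step-to-go state value function of `π` at step `h` in the episodic MDP
with transitions `P` and mean rewards `r`. -/
noncomputable def Vsteps {X A : Type*} [Fintype A] (P : ℕ → X → A → PMF X)
    (r : ℕ → X → A → ℝ) (π : ℕ → X → A → ℝ) : ℕ → ℕ → X → ℝ
  | 0, _, _ => 0
  | k + 1, h, x =>
      ∑ a, π h x a * (r h x a + pmfExp (P h x a) (Vsteps P r π k (h + 1)))

/-- Action-value function `Q_h^π` in the horizon-`H` episodic MDP `(P, r)`. -/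
noncomputable def Qh {X A : Type*} [Fintype A] (H : ℕ) (P : ℕ → X → A → PMF X)
    (r : ℕ → X → A → ℝ) (π : ℕ → X → A → ℝ) (h : ℕ) (x : X) (a : A) : ℝ :=
  r h x a + pmfExp (P h x a) fun x' => Vsteps P r π (H - (h + 1)) (h + 1) x'

/-- The Bellman operator `[T_h^π f](x,a) = r_h(x,a) + E_{x'∼P_h(·|x,a)}[f(x', π_{h+1})]`. -/
noncomputable def bellmanOp {X A : Type*} [Fintype A] (P : ℕ → X → A → PMF X)
    (r : ℕ → X → A → ℝ) (π : ℕ → X → A → ℝ) (h : ℕ) (f : X → A → ℝ)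
    (x : X) (a : A) : ℝ :=
  r h x a + pmfExp (P h x a) fun x' => ∑ a', π (h + 1) x' a' * f x' a'

/-- Fixed point of induced MDPs: the MDP `M(Q, π)` is identical to `M` except
its step-`h` mean reward is `r_h - ([T_h^π Q_{h+1}] - Q_h)`; then the
action-value functions of `π` in `M(Q, π)` equal `Q`. -/
theorem induced_mdp_fixed_point {X A : Type*} [Fintype A]
    (H : ℕ) (P : ℕ → X → A → PMF X) (r : ℕ → X → A → ℝ)
    (π : ℕ → X → A → ℝ) (hπ : IsPolicySeq π)
    (Q : ℕ → X → A → ℝ) (hQH : ∀ x a, Q H x a = 0) :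
    ∀ h < H, ∀ x a,
      Qh H P (fun h' x' a' => r h' x' a' - (bellmanOp P r π h' (Q (h' + 1)) x' a' - Q h' x' a'))
        π h x a = Q h x a := by
  set r' : ℕ → X → A → ℝ :=
    fun h' x' a' => r h' x' a' - (bellmanOp P r π h' (Q (h' + 1)) x' a' - Q h' x' a') with hr'
  have key : ∀ k h, h + k = H → ∀ x,
      Vsteps P r' π k h x = ∑ a, π h x a * Q h x a := by
    intro k
    induction k with
    | zero =>
      intro h hh x
      have : h = H := by omega
      subst this
      simp [Vsteps, hQH]
    | succ k ih =>
      intro h hh x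
      have h1 : (h + 1) + k = H := by omega
      have hrw : (fun x' => Vsteps P r' π k (h + 1) x')
          = fun x' => ∑ a', π (h + 1) x' a' * Q (h + 1) x' a' :=
        funext fun x' => ih (h + 1) h1 x'
      show (∑ a, π h x a * (r' h x a + pmfExp (P h x a) (Vsteps P r' π k (h + 1))))
          = ∑ a, π h x a * Q h x a
      refine Finset.sum_congr rfl fun a _ => ?_
      have : pmfExp (P h x a) (Vsteps P r' π k (h + 1))
          = pmfExp (P h x a) fun x' => ∑ a', π (h + 1) x' a' * Q (h + 1) x' a' :=
        congrArg _ hrw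
      rw [this, hr']
      simp only [bellmanOp]
      ring
  intro h hH x a
  have h1 : (h + 1) + (H - (h + 1)) = H := by omega
  have hrw : (fun x' => Vsteps P r' π (H - (h + 1)) (h + 1) x')
      = fun x' => ∑ a', π (h + 1) x' a' * Q (h + 1) x' a' :=
    funext fun x' => key (H - (h + 1)) (h + 1) h1 x'
  show r' h x a + pmfExp (P h x a)
      (fun x' => Vsteps P r' π (H - (h + 1)) (h + 1) x') = Q h x a
  rw [hrw, hr']
  simp only [bellmanOp]
  ring
end

section
/- Value difference under soft policy updates in induced MDPs: Let M be an episodic MDP with horizon H, finite action set A with |A| = K, and fixed initial state x₁. Let {Q^t}_{t∈[T]} be an arbitrary sequence of value functions with max_{h,t} ‖Q_h^t‖_∞ ≤ b, and define the policies π^1_h(·|s) uniform on A, and π_h^{t+1}(a|s) ∝ π_h^t(a|s)·exp(η Q_h^t(s,a)) for all (s,a,h,t). If η = √(ln K/(4(e−2) b² T)) and T ≥ ln K/(e−2), then for any policy π: Σ_{t=1}^T ( V^π_{1,M(π^t,Q^t)}(x₁) − V^{π^t}_{1,M(π^t,Q^t)}(x₁) ) ≤ 4 H b √(T log K). -/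
/-- State value function `V_h^π` in the horizon-`H` episodic MDP `(P, r)`. -/
noncomputable def Vh {X A : Type*} [Fintype A] (H : ℕ) (P : ℕ → X → A → PMF X)
    (r : ℕ → X → A → ℝ) (π : ℕ → X → A → ℝ) (h : ℕ) (x : X) : ℝ :=
  Vsteps P r π (H - h) h x

/-- Mean reward of the induced MDP `M(Q, π)`:
`r_h^{π,Q}(x,a) = r_h(x,a) - ([T_h^π Q_{h+1}](x,a) - Q_h(x,a))`. -/
noncomputable def inducedReward {X A : Type*} [Fintype A] (P : ℕ → X → A → PMF X)
    (r : ℕ → X → A → ℝ) (π : ℕ → X → A → ℝ) (Q : ℕ → X → A → ℝ)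
    (h : ℕ) (x : X) (a : A) : ℝ :=
  r h x a - (bellmanOp P r π h (Q (h + 1)) x a - Q h x a)


section PmfAux
variable {X : Type*} (p : PMF X)

lemma tsum_pmf_toReal : ∑' x, (p x).toReal = 1 := by
  rw [← ENNReal.tsum_toReal_eq (fun a => p.apply_ne_top a), p.tsum_coe, ENNReal.toReal_one]

lemma summable_pmf_toReal : Summable (fun x => (p x).toReal) :=
  ENNReal.summable_toReal (by rw [p.tsum_coe]; exact ENNReal.one_ne_top)

lemma summable_of_bound {f : X → ℝ} {C : ℝ} (hf : ∀ x, |f x| ≤ C) :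
    Summable fun x => (p x).toReal * f x := by
  apply Summable.of_abs
  refine Summable.of_nonneg_of_le (fun x => abs_nonneg _) (fun x => ?_)
    ((summable_pmf_toReal p).mul_right C)
  rw [abs_mul, abs_of_nonneg (ENNReal.toReal_nonneg)]
  exact mul_le_mul_of_nonneg_left (hf x) ENNReal.toReal_nonneg

lemma pmfExp_congr {f g : X → ℝ} (h : ∀ x, f x = g x) : pmfExp p f = pmfExp p g := by
  unfold pmfExp; exact tsum_congr (fun x => by rw [h x])

lemma pmfExp_const (c : ℝ) : pmfExp p (fun _ => c) = c := by
  unfold pmfExp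
  rw [tsum_mul_right, tsum_pmf_toReal, one_mul]

lemma pmfExp_mono {f g : X → ℝ} {C C' : ℝ} (hf : ∀ x, |f x| ≤ C) (hg : ∀ x, |g x| ≤ C')
    (h : ∀ x, f x ≤ g x) : pmfExp p f ≤ pmfExp p g := by
  unfold pmfExp
  exact Summable.tsum_le_tsum (fun x => mul_le_mul_of_nonneg_left (h x) ENNReal.toReal_nonneg)
    (summable_of_bound p hf) (summable_of_bound p hg)

lemma pmfExp_sub {f g : X → ℝ} {C C' : ℝ} (hf : ∀ x, |f x| ≤ C) (hg : ∀ x, |g x| ≤ C') :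
    pmfExp p (fun x => f x - g x) = pmfExp p f - pmfExp p g := by
  unfold pmfExp
  rw [← Summable.tsum_sub (summable_of_bound p hf) (summable_of_bound p hg)]
  exact tsum_congr (fun x => by ring)

lemma pmfExp_abs_le {f : X → ℝ} {C : ℝ} (hC : 0 ≤ C) (hf : ∀ x, |f x| ≤ C) :
    |pmfExp p f| ≤ C := by
  rw [abs_le]
  constructor
  · have := pmfExp_mono p (f := fun _ => -C) (g := f) (C := C) (C' := C)
      (fun x => by rw [abs_neg, abs_of_nonneg hC]) hf (fun x => (abs_le.mp (hf x)).1)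
    rwa [pmfExp_const] at this
  · have := pmfExp_mono p (f := f) (g := fun _ => C) (C := C) (C' := C)
      hf (fun x => by rw [abs_of_nonneg hC]) (fun x => (abs_le.mp (hf x)).2)
    rwa [pmfExp_const] at this

lemma pmfExp_sum {ι : Type*} {s : Finset ι} {f : ι → X → ℝ} {C : ι → ℝ}
    (hf : ∀ i, ∀ x, |f i x| ≤ C i) :
    pmfExp p (fun x => ∑ i ∈ s, f i x) = ∑ i ∈ s, pmfExp p (f i) := by
  unfold pmfExp
  rw [← Summable.tsum_finsetSum (fun i _ => summable_of_bound p (hf i))]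
  exact tsum_congr (fun x => by rw [Finset.mul_sum])

end PmfAux

lemma exp_le_one_add_add_sq {x : ℝ} (h : |x| ≤ 1) : Real.exp x ≤ 1 + x + x ^ 2 := by
  have hb := Real.exp_bound h (n := 3) (by norm_num)
  have h1 : ∑ m ∈ Finset.range 3, x ^ m / (m.factorial : ℝ) = 1 + x + x ^ 2 / 2 := by
    rw [Finset.sum_range_succ, Finset.sum_range_succ, Finset.sum_range_succ]
    norm_num [Nat.factorial]
  have h2 : (((3:ℕ).succ : ℝ) / ((3:ℕ).factorial * (3:ℕ))) = 2/9 := by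
    norm_num [Nat.factorial]
  rw [h1, h2] at hb
  have h3 : |x| ^ 3 ≤ x ^ 2 := by
    have e : |x| ^ 3 = x ^ 2 * |x| := by rw [← sq_abs]; ring
    rw [e]
    nlinarith [sq_nonneg x, abs_nonneg x]
  have h4 := (abs_le.mp hb).2
  nlinarith

lemma hedge_regret_s17 {A : Type*} [Fintype A] [Nonempty A] (K : ℕ) (hK : K = Fintype.card A)
    (hK1 : 1 ≤ K) (b η : ℝ) (hb : 0 < b) (hηpos : 0 < η) (hηb : η * b ≤ 1) (T : ℕ)
    (q : ℕ → A → ℝ) (hq : ∀ t a, |q t a| ≤ b)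
    (w : ℕ → A → ℝ) (hw0 : ∀ a, w 0 a = 1 / K)
    (hwrec : ∀ t a, w (t + 1) a = w t a * Real.exp (η * q t a) /
      ∑ a', w t a' * Real.exp (η * q t a'))
    (p : A → ℝ) (hp0 : ∀ a, 0 ≤ p a) (hp1 : ∑ a, p a = 1) :
    ∑ t ∈ Finset.range T, ((∑ a, p a * q t a) - ∑ a, w t a * q t a)
      ≤ Real.log K / η + η * b ^ 2 * T := by
  have hKpos : (0 : ℝ) < K := by exact_mod_cast hK1
  -- positivity of weights
  have hwpos : ∀ t a, 0 < w t a := by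
    intro t
    induction t with
    | zero => intro a; rw [hw0]; positivity
    | succ n ih =>
      intro a
      have hZ : 0 < ∑ a', w n a' * Real.exp (η * q n a') :=
        Finset.sum_pos (fun a' _ => mul_pos (ih a') (Real.exp_pos _)) Finset.univ_nonempty
      rw [hwrec]
      exact div_pos (mul_pos (ih a) (Real.exp_pos _)) hZ
  set Z : ℕ → ℝ := fun t => ∑ a', w t a' * Real.exp (η * q t a') with hZdef
  have hZpos : ∀ t, 0 < Z t := fun t =>
    Finset.sum_pos (fun a' _ => mul_pos (hwpos t a') (Real.exp_pos _)) Finset.univ_nonempty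
  have hwsum : ∀ t, ∑ a, w t a = 1 := by
    intro t
    induction t with
    | zero =>
      simp only [hw0]
      rw [Finset.sum_const, Finset.card_univ, ← hK, nsmul_eq_mul]
      field_simp
    | succ n ih =>
      have : ∀ a, w (n + 1) a = w n a * Real.exp (η * q n a) / Z n := fun a => hwrec n a
      rw [Finset.sum_congr rfl (fun a _ => this a), ← Finset.sum_div]
      exact div_self (ne_of_gt (hZpos n))
  have hwle1 : ∀ t a, w t a ≤ 1 := by
    intro t a
    rw [← hwsum t]
    exact Finset.single_le_sum (fun a' _ => (hwpos t a').le) (Finset.mem_univ a)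
  -- closed form
  have hcf : ∀ t a, w t a * ∏ s ∈ Finset.range t, Z s
      = (1 / K) * Real.exp (η * ∑ s ∈ Finset.range t, q s a) := by
    intro t
    induction t with
    | zero => intro a; simp [hw0]
    | succ n ih =>
      intro a
      have hZn : Z n ≠ 0 := ne_of_gt (hZpos n)
      rw [Finset.prod_range_succ, Finset.sum_range_succ, hwrec n a, mul_add, Real.exp_add,
        ← mul_assoc (1 / (K : ℝ)), ← ih a]
      field_simp
      have hZn' : Z n * (∑ a', w n a' * Real.exp (η * q n a'))⁻¹ = 1 := mul_inv_cancel₀ hZn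
      linear_combination (w n a * ∏ x ∈ Finset.range n, Z x) * hZn'
  -- upper bound on log Z t
  have hZub : ∀ t, Real.log (Z t) ≤ η * (∑ a, w t a * q t a) + η ^ 2 * b ^ 2 := by
    intro t
    have h1 : Z t ≤ 1 + η * (∑ a, w t a * q t a) + η ^ 2 * b ^ 2 := by
      have hterm : ∀ a, w t a * Real.exp (η * q t a)
          ≤ w t a + η * (w t a * q t a) + η ^ 2 * (w t a * b ^ 2) := by
        intro a
        have habs : |η * q t a| ≤ 1 := by
          rw [abs_mul, abs_of_pos hηpos]
          exact (mul_le_mul_of_nonneg_left (hq t a) hηpos.le).trans hηb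
        have he := exp_le_one_add_add_sq habs
        have hq2 : (q t a) ^ 2 ≤ b ^ 2 := by
          rw [← sq_abs]
          exact pow_le_pow_left₀ (abs_nonneg _) (hq t a) 2
        have hw := (hwpos t a).le
        nlinarith [mul_le_mul_of_nonneg_left he hw,
          mul_le_mul_of_nonneg_left hq2 (mul_nonneg (sq_nonneg η) hw)]
      calc Z t ≤ ∑ a, (w t a + η * (w t a * q t a) + η ^ 2 * (w t a * b ^ 2)) :=
            Finset.sum_le_sum (fun a _ => hterm a)
        _ = (∑ a, w t a) + η * (∑ a, w t a * q t a) + η ^ 2 * ((∑ a, w t a) * b ^ 2) := by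
            rw [Finset.sum_add_distrib, Finset.sum_add_distrib, ← Finset.mul_sum,
              ← Finset.mul_sum, ← Finset.sum_mul]
        _ = 1 + η * (∑ a, w t a * q t a) + η ^ 2 * b ^ 2 := by rw [hwsum t]; ring
    have := Real.log_le_sub_one_of_pos (hZpos t)
    linarith
  -- lower bound via best action
  obtain ⟨astar, -, hastar⟩ := Finset.exists_max_image Finset.univ
    (fun a => ∑ t ∈ Finset.range T, q t a) Finset.univ_nonempty
  have hlb : η * (∑ t ∈ Finset.range T, q t astar) - Real.log K
      ≤ ∑ t ∈ Finset.range T, Real.log (Z t) := by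
    have h1 : (1 / K) * Real.exp (η * ∑ t ∈ Finset.range T, q t astar)
        ≤ ∏ t ∈ Finset.range T, Z t := by
      rw [← hcf T astar]
      have hppos : 0 < ∏ t ∈ Finset.range T, Z t :=
        Finset.prod_pos (fun t _ => hZpos t)
      nlinarith [hwle1 T astar, hwpos T astar]
    have h2 := Real.log_le_log (by positivity) h1
    rw [Real.log_mul (by positivity) (ne_of_gt (Real.exp_pos _)), Real.log_exp,
      Real.log_prod (fun t _ => ne_of_gt (hZpos t))] at h2
    have : Real.log (1 / (K : ℝ)) = -Real.log K := by
      rw [one_div, Real.log_inv]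
    linarith [this ▸ h2]
  -- combine
  have hcomp : ∑ t ∈ Finset.range T, (∑ a, p a * q t a) ≤ ∑ t ∈ Finset.range T, q t astar := by
    have hswap : ∑ t ∈ Finset.range T, (∑ a, p a * q t a)
        = ∑ a, p a * ∑ t ∈ Finset.range T, q t a := by
      rw [Finset.sum_comm]
      exact Finset.sum_congr rfl (fun a _ => by rw [Finset.mul_sum])
    rw [hswap]
    calc ∑ a, p a * ∑ t ∈ Finset.range T, q t a
        ≤ ∑ a, p a * ∑ t ∈ Finset.range T, q t astar :=
          Finset.sum_le_sum (fun a _ =>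
            mul_le_mul_of_nonneg_left (hastar a (Finset.mem_univ a)) (hp0 a))
      _ = ∑ t ∈ Finset.range T, q t astar := by rw [← Finset.sum_mul, hp1, one_mul]
  have hub : ∑ t ∈ Finset.range T, Real.log (Z t)
      ≤ η * (∑ t ∈ Finset.range T, ∑ a, w t a * q t a) + η ^ 2 * b ^ 2 * T := by
    calc ∑ t ∈ Finset.range T, Real.log (Z t)
        ≤ ∑ t ∈ Finset.range T, (η * (∑ a, w t a * q t a) + η ^ 2 * b ^ 2) :=
          Finset.sum_le_sum (fun t _ => hZub t)
      _ = η * (∑ t ∈ Finset.range T, ∑ a, w t a * q t a) + η ^ 2 * b ^ 2 * T := by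
          rw [Finset.sum_add_distrib, ← Finset.mul_sum, Finset.sum_const, Finset.card_range]
          ring
  rw [Finset.sum_sub_distrib]
  calc ∑ t ∈ Finset.range T, (∑ a, p a * q t a) - ∑ t ∈ Finset.range T, ∑ a, w t a * q t a
      ≤ (Real.log K + η ^ 2 * b ^ 2 * T) / η := by
        rw [le_div_iff₀ hηpos]
        nlinarith [hlb, hub, hcomp]
    _ = Real.log K / η + η * b ^ 2 * T := by field_simp

lemma eta_arith (b L c : ℝ) (T : ℕ) (hb : 0 < b) (hL : 0 < L) (hT : 0 < (T : ℝ))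
    (hc : 0.7 ≤ c) (hc' : c ≤ 0.72) (hTc : L / c ≤ T) :
    0 < Real.sqrt (L / (4 * c * b ^ 2 * T)) ∧
    Real.sqrt (L / (4 * c * b ^ 2 * T)) * b ≤ 1 ∧
    L / Real.sqrt (L / (4 * c * b ^ 2 * T))
      + Real.sqrt (L / (4 * c * b ^ 2 * T)) * b ^ 2 * T ≤ 4 * b * Real.sqrt (T * L) := by
  have hcpos : (0 : ℝ) < c := by linarith
  set η := Real.sqrt (L / (4 * c * b ^ 2 * T)) with hηdef
  have hDpos : 0 < 4 * c * b ^ 2 * (T : ℝ) := by positivity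
  have hηpos : 0 < η := Real.sqrt_pos.mpr (div_pos hL hDpos)
  have hη2 : η ^ 2 = L / (4 * c * b ^ 2 * T) := Real.sq_sqrt (div_pos hL hDpos).le
  refine ⟨hηpos, ?_, ?_⟩
  · -- η * b ≤ 1
    have h1 : L / (4 * c * b ^ 2 * T) ≤ 1 / (4 * b ^ 2) := by
      rw [div_le_div_iff₀ hDpos (by positivity)]
      have : L ≤ c * T := by
        rw [div_le_iff₀ hcpos] at hTc
        linarith [hTc]
      nlinarith [sq_nonneg b]
    have h2 : η ≤ 1 / (2 * b) := by
      have := Real.sqrt_le_sqrt h1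
      rwa [show (1 : ℝ) / (4 * b ^ 2) = (1 / (2 * b)) ^ 2 by field_simp; ring,
        Real.sqrt_sq (by positivity)] at this
    calc η * b ≤ (1 / (2 * b)) * b := mul_le_mul_of_nonneg_right h2 hb.le
      _ ≤ 1 := by
        rw [div_mul_eq_mul_div, div_le_one (by positivity)]
        linarith
  · -- main bound
    have hLη : L / η = η * (4 * c * b ^ 2 * T) := by
      rw [div_eq_iff (ne_of_gt hηpos)]
      rw [show η * (4 * c * b ^ 2 * ↑T) * η = η ^ 2 * (4 * c * b ^ 2 * ↑T) by ring, hη2,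
        div_mul_cancel₀ _ (ne_of_gt hDpos)]
    rw [hLη]
    have hform : η * (4 * c * b ^ 2 * ↑T) + η * b ^ 2 * ↑T = η * b ^ 2 * ↑T * (4 * c + 1) := by
      ring
    rw [hform]
    have hs2 : Real.sqrt (T * L) ^ 2 = T * L := Real.sq_sqrt (by positivity)
    have hspos : 0 < Real.sqrt ((T : ℝ) * L) := Real.sqrt_pos.mpr (by positivity)
    have hsq : (η * b ^ 2 * ↑T * (4 * c + 1)) ^ 2 ≤ (4 * b * Real.sqrt (T * L)) ^ 2 := by
      have e1 : (η * b ^ 2 * ↑T * (4 * c + 1)) ^ 2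
          = η ^ 2 * (b ^ 2) ^ 2 * (T : ℝ) ^ 2 * (4 * c + 1) ^ 2 := by ring
      have e2 : (4 * b * Real.sqrt (T * L)) ^ 2 = 16 * b ^ 2 * (T * L) := by
        rw [mul_pow, mul_pow, hs2]; ring
      rw [e1, e2, hη2]
      rw [div_mul_eq_mul_div, div_mul_eq_mul_div, div_mul_eq_mul_div, div_le_iff₀ hDpos]
      have hkey : (4 * c + 1) ^ 2 ≤ 64 * c := by nlinarith
      nlinarith [sq_nonneg b, sq_nonneg (T : ℝ), mul_pos hT hL, sq_nonneg (b * (T:ℝ)),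
        mul_nonneg (mul_nonneg hL.le (sq_nonneg (b^2))) (sq_nonneg (T:ℝ))]
    have hl0 : 0 ≤ η * b ^ 2 * ↑T * (4 * c + 1) :=
      mul_nonneg (by positivity) (by linarith)
    have h := Real.sqrt_le_sqrt hsq
    rwa [Real.sqrt_sq hl0, Real.sqrt_sq (by positivity)] at h

lemma inner_abs_le {A : Type*} [Fintype A] {w f : A → ℝ} {b : ℝ} (hw0 : ∀ a, 0 ≤ w a)
    (hw1 : ∑ a, w a = 1) (hf : ∀ a, |f a| ≤ b) : |∑ a, w a * f a| ≤ b := by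
  calc |∑ a, w a * f a| ≤ ∑ a, |w a * f a| := Finset.abs_sum_le_sum_abs _ _
    _ ≤ ∑ a, w a * b := Finset.sum_le_sum (fun a _ => by
        rw [abs_mul, abs_of_nonneg (hw0 a)]
        exact mul_le_mul_of_nonneg_left (hf a) (hw0 a))
    _ = b := by rw [← Finset.sum_mul, hw1, one_mul]

lemma Vsteps_abs_le {X A : Type*} [Fintype A] (P : ℕ → X → A → PMF X)
    {r' : ℕ → X → A → ℝ} {ρ : ℕ → X → A → ℝ} (hρ : IsPolicySeq ρ)
    {c : ℝ} (hc : 0 ≤ c) (hr : ∀ h x a, |r' h x a| ≤ c) :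
    ∀ k h x, |Vsteps P r' ρ k h x| ≤ k * c := by
  intro k
  induction k with
  | zero => intro h x; simp [Vsteps]
  | succ k ih =>
    intro h x
    have hterm : ∀ a, |r' h x a + pmfExp (P h x a) (Vsteps P r' ρ k (h + 1))| ≤ c + k * c := by
      intro a
      refine (abs_add_le _ _).trans (add_le_add (hr h x a) ?_)
      exact pmfExp_abs_le _ (by positivity) (fun x' => ih (h + 1) x')
    have := inner_abs_le (hρ h x).1 (hρ h x).2 hterm
    calc |Vsteps P r' ρ (k + 1) h x|
        = |∑ a, ρ h x a * (r' h x a + pmfExp (P h x a) (Vsteps P r' ρ k (h + 1)))| := by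
          simp only [Vsteps]
      _ ≤ c + k * c := this
      _ = (↑(k + 1)) * c := by push_cast; ring

lemma Vsteps_congr_policy {X A : Type*} [Fintype A] (P : ℕ → X → A → PMF X)
    (r : ℕ → X → A → ℝ) {ρ1 ρ2 : ℕ → X → A → ℝ} (hr : ∀ h x a, ρ1 h x a = ρ2 h x a) :
    ∀ k h x, Vsteps P r ρ1 k h x = Vsteps P r ρ2 k h x := by
  intro k
  induction k with
  | zero => intro h x; simp [Vsteps]
  | succ k ih =>
    intro h x
    simp only [Vsteps]
    refine Finset.sum_congr rfl (fun a _ => ?_)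
    rw [hr h x a, pmfExp_congr _ (fun x' => ih (h + 1) x')]

lemma inducedReward_eq {X A : Type*} [Fintype A] (P : ℕ → X → A → PMF X)
    (r : ℕ → X → A → ℝ) (ρ : ℕ → X → A → ℝ) (Q : ℕ → X → A → ℝ) (h : ℕ) (x : X) (a : A) :
    inducedReward P r ρ Q h x a = Q h x a
      - pmfExp (P h x a) (fun x' => ∑ a', ρ (h + 1) x' a' * Q (h + 1) x' a') := by
  unfold inducedReward bellmanOp
  ring

lemma onpolicy_value {X A : Type*} [Fintype A] (P : ℕ → X → A → PMF X) (H : ℕ)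
    (Q ρ : ℕ → X → A → ℝ) (hQH : ∀ x a, Q H x a = 0)
    (r' : ℕ → X → A → ℝ)
    (hr' : ∀ h x a, r' h x a = Q h x a
      - pmfExp (P h x a) (fun x' => ∑ a', ρ (h + 1) x' a' * Q (h + 1) x' a')) :
    ∀ k h, h + k = H → ∀ x, Vsteps P r' ρ k h x = ∑ a, ρ h x a * Q h x a := by
  intro k
  induction k with
  | zero =>
    intro h hh x
    have : h = H := by omega
    subst this
    simp [Vsteps, hQH]
  | succ k ih =>
    intro h hh x
    simp only [Vsteps]
    refine Finset.sum_congr rfl (fun a _ => ?_)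
    rw [pmfExp_congr (P h x a) (fun x' => ih (h + 1) (by omega) x'), hr']
    ring

lemma cumulative {X A : Type*} [Fintype A] (P : ℕ → X → A → PMF X) (H T : ℕ)
    (b R : ℝ) (hb : 0 < b)
    (Q : ℕ → ℕ → X → A → ℝ) (hQb : ∀ t h x a, |Q t h x a| ≤ b)
    (hQH : ∀ t x a, Q t H x a = 0)
    (ρ : ℕ → ℕ → X → A → ℝ) (hρ : ∀ t, IsPolicySeq (ρ t))
    (π : ℕ → X → A → ℝ) (hπ : IsPolicySeq π)
    (r' : ℕ → ℕ → X → A → ℝ)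
    (hr' : ∀ t h x a, r' t h x a = Q t h x a
      - pmfExp (P h x a) (fun x' => ∑ a', ρ t (h + 1) x' a' * Q t (h + 1) x' a'))
    (hhedge : ∀ h x, ∑ t ∈ Finset.range T,
      ((∑ a, π h x a * Q t h x a) - ∑ a, ρ t h x a * Q t h x a) ≤ R) :
    ∀ k h, h + k = H → ∀ x, ∑ t ∈ Finset.range T, Vsteps P (r' t) π k h x
      ≤ (∑ t ∈ Finset.range T, ∑ a, ρ t h x a * Q t h x a) + k * R := by
  have hinner : ∀ t h x, |∑ a', ρ t h x a' * Q t h x a'| ≤ b := by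
    intro t h x
    exact inner_abs_le ((hρ t) h x).1 ((hρ t) h x).2 (fun a' => hQb t h x a')
  have hrb : ∀ t h x a, |r' t h x a| ≤ 2 * b := by
    intro t h x a
    rw [hr', sub_eq_add_neg]
    refine (abs_add_le _ _).trans ?_
    rw [abs_neg]
    have h2 : |pmfExp (P h x a) (fun x' => ∑ a', ρ t (h + 1) x' a' * Q t (h + 1) x' a')| ≤ b :=
      pmfExp_abs_le _ hb.le (fun x' => hinner t (h + 1) x')
    linarith [hQb t h x a]
  have hVb : ∀ t k h x, |Vsteps P (r' t) π k h x| ≤ k * (2 * b) := fun t =>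
    Vsteps_abs_le P hπ (by positivity) (hrb t)
  intro k
  induction k with
  | zero =>
    intro h hh x
    have : h = H := by omega
    subst this
    simp [Vsteps, hQH]
  | succ k ih =>
    intro h hh x
    have hh1 : (h + 1) + k = H := by omega
    have hFb : ∀ t x', |Vsteps P (r' t) π k (h + 1) x'
        - ∑ a', ρ t (h + 1) x' a' * Q t (h + 1) x' a'| ≤ k * (2 * b) + b := by
      intro t x'
      rw [sub_eq_add_neg]
      refine (abs_add_le _ _).trans ?_
      rw [abs_neg]
      exact add_le_add (hVb t k (h + 1) x') (hinner t (h + 1) x')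
    have hexp : ∀ t ∈ Finset.range T, Vsteps P (r' t) π (k + 1) h x
        = (∑ a, π h x a * Q t h x a)
          + ∑ a, π h x a * pmfExp (P h x a)
              (fun x' => Vsteps P (r' t) π k (h + 1) x'
                - ∑ a', ρ t (h + 1) x' a' * Q t (h + 1) x' a') := by
      intro t _
      simp only [Vsteps]
      rw [← Finset.sum_add_distrib]
      refine Finset.sum_congr rfl (fun a _ => ?_)
      rw [pmfExp_sub (P h x a) (C := (k : ℝ) * (2 * b)) (C' := b)
        (fun x' => hVb t k (h + 1) x') (fun x' => hinner t (h + 1) x'), hr']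
      ring
    rw [Finset.sum_congr rfl hexp, Finset.sum_add_distrib]
    have hsecond : ∑ t ∈ Finset.range T, ∑ a, π h x a * pmfExp (P h x a)
        (fun x' => Vsteps P (r' t) π k (h + 1) x'
          - ∑ a', ρ t (h + 1) x' a' * Q t (h + 1) x' a') ≤ (k : ℝ) * R := by
      rw [Finset.sum_comm]
      have hcomb : ∀ a ∈ Finset.univ, ∑ t ∈ Finset.range T, π h x a * pmfExp (P h x a)
          (fun x' => Vsteps P (r' t) π k (h + 1) x'
            - ∑ a', ρ t (h + 1) x' a' * Q t (h + 1) x' a')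
          = π h x a * pmfExp (P h x a)
            (fun x' => ∑ t ∈ Finset.range T, (Vsteps P (r' t) π k (h + 1) x'
              - ∑ a', ρ t (h + 1) x' a' * Q t (h + 1) x' a')) := by
        intro a _
        rw [← Finset.mul_sum, ← pmfExp_sum (P h x a) (C := fun t => (k : ℝ) * (2 * b) + b)
          (fun t x' => hFb t x')]
      rw [Finset.sum_congr rfl hcomb]
      have hptwise : ∀ x', ∑ t ∈ Finset.range T, (Vsteps P (r' t) π k (h + 1) x'
          - ∑ a', ρ t (h + 1) x' a' * Q t (h + 1) x' a') ≤ (k : ℝ) * R := by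
        intro x'
        rw [Finset.sum_sub_distrib]
        have := ih (h + 1) hh1 x'
        linarith
      have hFsumb : ∀ x', |∑ t ∈ Finset.range T, (Vsteps P (r' t) π k (h + 1) x'
          - ∑ a', ρ t (h + 1) x' a' * Q t (h + 1) x' a')| ≤ T * ((k : ℝ) * (2 * b) + b) := by
        intro x'
        refine (Finset.abs_sum_le_sum_abs _ _).trans ?_
        calc ∑ t ∈ Finset.range T, |Vsteps P (r' t) π k (h + 1) x'
              - ∑ a', ρ t (h + 1) x' a' * Q t (h + 1) x' a'|
            ≤ ∑ _t ∈ Finset.range T, ((k : ℝ) * (2 * b) + b) :=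
              Finset.sum_le_sum (fun t _ => hFb t x')
          _ = T * ((k : ℝ) * (2 * b) + b) := by
              rw [Finset.sum_const, Finset.card_range, nsmul_eq_mul]
      have hle : ∀ a ∈ Finset.univ, π h x a * pmfExp (P h x a)
          (fun x' => ∑ t ∈ Finset.range T, (Vsteps P (r' t) π k (h + 1) x'
            - ∑ a', ρ t (h + 1) x' a' * Q t (h + 1) x' a')) ≤ π h x a * ((k : ℝ) * R) := by
        intro a _
        refine mul_le_mul_of_nonneg_left ?_ ((hπ h x).1 a)
        have := pmfExp_mono (P h x a) (C := (T : ℝ) * ((k : ℝ) * (2 * b) + b))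
          (C' := |(k : ℝ) * R|) (g := fun _ => (k : ℝ) * R) hFsumb (fun _ => le_refl _)
          hptwise
        rwa [pmfExp_const] at this
      calc ∑ a, π h x a * pmfExp (P h x a)
            (fun x' => ∑ t ∈ Finset.range T, (Vsteps P (r' t) π k (h + 1) x'
              - ∑ a', ρ t (h + 1) x' a' * Q t (h + 1) x' a'))
          ≤ ∑ a, π h x a * ((k : ℝ) * R) := Finset.sum_le_sum hle
        _ = (k : ℝ) * R := by rw [← Finset.sum_mul, (hπ h x).2, one_mul]
    have hfirst : ∑ t ∈ Finset.range T, ∑ a, π h x a * Q t h x a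
        ≤ (∑ t ∈ Finset.range T, ∑ a, ρ t h x a * Q t h x a) + R := by
      have := hhedge h x
      rw [Finset.sum_sub_distrib] at this
      linarith
    push_cast
    linarith

/-- Value difference under soft (Hedge) policy updates in the induced MDPs:
if `π^1` is uniform, `π^{t+1}_h(a|s) ∝ π^t_h(a|s) exp(η Q_h^t(s,a))`,
`η = √(ln K/(4(e-2) b² T))` and `T ≥ ln K/(e-2)`, then for any comparator
policy `π`, `Σ_{t<T} (V^π_{1,M(π^t,Q^t)}(x₁) - V^{π^t}_{1,M(π^t,Q^t)}(x₁))
≤ 4 H b √(T log K)`. -/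
theorem value_difference_soft_policy_updates {X A : Type*} [Fintype A]
    (K : ℕ) (hK : K = Fintype.card A) (hK1 : 1 ≤ K)
    (H : ℕ) (P : ℕ → X → A → PMF X) (r : ℕ → X → A → ℝ) (x1 : X)
    (b : ℝ) (hb : 0 < b) (T : ℕ)
    (Qt : ℕ → ℕ → X → A → ℝ)
    (hQb : ∀ t h x a, |Qt t h x a| ≤ b)
    (hQH : ∀ t x a, Qt t H x a = 0)
    (η : ℝ) (hη : η = Real.sqrt (Real.log K / (4 * (Real.exp 1 - 2) * b ^ 2 * T)))
    (hT : (T : ℝ) ≥ Real.log K / (Real.exp 1 - 2))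
    (πs : ℕ → ℕ → X → A → ℝ)
    (hπ0 : ∀ h x a, πs 0 h x a = 1 / (K : ℝ))
    (hπs : ∀ t h x a, πs (t + 1) h x a =
      πs t h x a * Real.exp (η * Qt t h x a) /
        ∑ a', πs t h x a' * Real.exp (η * Qt t h x a'))
    (π : ℕ → X → A → ℝ) (hπ : IsPolicySeq π) :
    ∑ t ∈ Finset.range T,
        (Vh H P (inducedReward P r (πs t) (Qt t)) π 0 x1
          - Vh H P (inducedReward P r (πs t) (Qt t)) (πs t) 0 x1) ≤
      4 * H * b * Real.sqrt (T * Real.log K) := by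
  rcases eq_or_lt_of_le hK1 with hK2 | hK2
  · -- K = 1 : both policies are the constant-1 policy, LHS = 0
    have hA1 : Fintype.card A = 1 := by omega
    obtain ⟨a0, ha0⟩ := Fintype.card_eq_one_iff.mp hA1
    have hsum1 : ∀ f : A → ℝ, ∑ a, f a = f a0 := fun f =>
      Finset.sum_eq_single_of_mem a0 (Finset.mem_univ _) (fun b _ hb => absurd (ha0 b) hb)
    have hKr : (K : ℝ) = 1 := by rw [← hK2]; norm_num
    have hπs1 : ∀ t h x a, πs t h x a = 1 := by
      intro t
      induction t with
      | zero => intro h x a; rw [hπ0, hKr]; norm_num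
      | succ n ih =>
        intro h x a
        rw [hπs, hsum1, ha0 a, ih]
        rw [one_mul, div_self (ne_of_gt (Real.exp_pos _))]
    have hπ1 : ∀ h x a, π h x a = 1 := by
      intro h x a
      have h2 := (hπ h x).2
      rw [hsum1] at h2
      rw [ha0 a]
      exact h2
    have hzero : ∀ t ∈ Finset.range T,
        Vh H P (inducedReward P r (πs t) (Qt t)) π 0 x1
          - Vh H P (inducedReward P r (πs t) (Qt t)) (πs t) 0 x1 = 0 := by
      intro t _
      rw [sub_eq_zero]
      exact Vsteps_congr_policy P _ (fun h x a => by rw [hπ1, hπs1]) _ _ _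
    rw [Finset.sum_eq_zero hzero]
    positivity
  · -- K ≥ 2
    have hKA2 : 2 ≤ Fintype.card A := by omega
    haveI : Nonempty A := Fintype.card_pos_iff.mp (by omega)
    set L : ℝ := Real.log K with hLdef
    set c : ℝ := Real.exp 1 - 2 with hcdef
    have hL : 0 < L := Real.log_pos (by exact_mod_cast hK2)
    have hc : (0.7 : ℝ) ≤ c := by
      have := Real.exp_one_gt_d9
      rw [hcdef]; norm_num at this ⊢; linarith
    have hc' : c ≤ 0.72 := by
      have := Real.exp_one_lt_d9
      rw [hcdef]; norm_num at this ⊢; linarith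
    have hcpos : (0 : ℝ) < c := by linarith
    have hTc : L / c ≤ (T : ℝ) := hT
    have hTpos : (0 : ℝ) < T := lt_of_lt_of_le (div_pos hL hcpos) hTc
    obtain ⟨hηpos, hηb, hmain⟩ := eta_arith b L c T hb hL hTpos hc hc' hTc
    rw [← hη] at hηpos hηb hmain
    set R : ℝ := L / η + η * b ^ 2 * T with hRdef
    -- πs t is a policy sequence
    have hρpol : ∀ t, IsPolicySeq (πs t) := by
      intro t
      induction t with
      | zero =>
        intro h x
        constructor
        · intro a; rw [hπ0]; positivity
        · rw [Finset.sum_congr rfl (fun a _ => hπ0 h x a), Finset.sum_const,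
            Finset.card_univ, ← hK, nsmul_eq_mul]
          field_simp
      | succ n ih =>
        intro h x
        have h0 := (ih h x).1
        have h1 := (ih h x).2
        have hZ : 0 < ∑ a', πs n h x a' * Real.exp (η * Qt n h x a') := by
          obtain ⟨a1, -, ha1⟩ := Finset.exists_lt_of_sum_lt
            (f := fun _ : A => (0 : ℝ)) (g := fun a => πs n h x a)
            (by rw [h1]; simp)
          exact Finset.sum_pos' (fun a _ => mul_nonneg (h0 a) (Real.exp_pos _).le)
            ⟨a1, Finset.mem_univ a1, mul_pos ha1 (Real.exp_pos _)⟩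
        constructor
        · intro a
          rw [hπs]
          exact div_nonneg (mul_nonneg (h0 a) (Real.exp_pos _).le) hZ.le
        · rw [Finset.sum_congr rfl (fun a _ => hπs n h x a), ← Finset.sum_div,
            div_self (ne_of_gt hZ)]
    -- per-state hedge bound
    have hhedge : ∀ h x, ∑ t ∈ Finset.range T,
        ((∑ a, π h x a * Qt t h x a) - ∑ a, πs t h x a * Qt t h x a) ≤ R := by
      intro h x
      have := hedge_regret_s17 K hK hK1 b η hb hηpos (by linarith) T
        (fun t a => Qt t h x a) (fun t a => hQb t h x a)
        (fun t a => πs t h x a) (fun a => hπ0 h x a) (fun t a => hπs t h x a)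
        (fun a => π h x a) (fun a => (hπ h x).1 a) (hπ h x).2
      exact this
    -- on-policy values
    have hon : ∀ t, Vh H P (inducedReward P r (πs t) (Qt t)) (πs t) 0 x1
        = ∑ a, πs t 0 x1 a * Qt t 0 x1 a := by
      intro t
      simp only [Vh, Nat.sub_zero]
      exact onpolicy_value P H (Qt t) (πs t) (hQH t) _
        (fun h x a => inducedReward_eq P r (πs t) (Qt t) h x a) H 0 (by omega) x1
    have hcum := cumulative P H T b R hb Qt hQb hQH πs hρpol π hπ
      (fun t => inducedReward P r (πs t) (Qt t))
      (fun t h x a => inducedReward_eq P r (πs t) (Qt t) h x a)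
      hhedge H 0 (by omega) x1
    simp only [Vh, Nat.sub_zero] at hcum ⊢
    have honsum : ∑ t ∈ Finset.range T,
        Vsteps P (inducedReward P r (πs t) (Qt t)) (πs t) H 0 x1
        = ∑ t ∈ Finset.range T, ∑ a, πs t 0 x1 a * Qt t 0 x1 a :=
      Finset.sum_congr rfl (fun t _ => by
        have := hon t; simp only [Vh, Nat.sub_zero] at this; exact this)
    rw [Finset.sum_sub_distrib, honsum]
    have hstep : ∑ t ∈ Finset.range T, Vsteps P (inducedReward P r (πs t) (Qt t)) π H 0 x1
        - ∑ t ∈ Finset.range T, ∑ a, πs t 0 x1 a * Qt t 0 x1 a ≤ (H : ℝ) * R := by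
      linarith
    have hHR : (H : ℝ) * R ≤ (H : ℝ) * (4 * b * Real.sqrt (T * L)) :=
      mul_le_mul_of_nonneg_left hmain (Nat.cast_nonneg H)
    calc ∑ t ∈ Finset.range T, Vsteps P (inducedReward P r (πs t) (Qt t)) π H 0 x1
          - ∑ t ∈ Finset.range T, ∑ a, πs t 0 x1 a * Qt t 0 x1 a
        ≤ (H : ℝ) * R := hstep
      _ ≤ (H : ℝ) * (4 * b * Real.sqrt (T * L)) := hHR
      _ = 4 * H * b * Real.sqrt (T * Real.log K) := by rw [hLdef]; ring
end
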